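/- Let B_n be a sequence of m×n real matrices converging to B, and suppose K(B_n) := inf over nonzero v in (ker B_n)^⊥ of ‖B_n v‖/‖v‖ converges to 0. Then there exists a unit vector h̄ in (the limit of a convergent subsequence of minimizing unit vectors) with B h̄ = 0 and h̄ is a limit of vectors orthogonal to ker B_n; consequently dim ker B > liminf dim ker B_n, i.e. rank B < liminf rank B_n. -/

import Mathlib

open Filter

section Aux

variable {m n : ℕ}

/-- If `B_k → B` in operator norm, `x_k → x̄`, and `B_k x_k → 0`, then `B x̄ = 0`. -/
lemma stmt5_aux_ker_of_lim
    (Bs : ℕ → (EuclideanSpace ℝ (Fin n) →L[ℝ] EuclideanSpace ℝ (Fin m)))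
    (B : EuclideanSpace ℝ (Fin n) →L[ℝ] EuclideanSpace ℝ (Fin m))
    (hBs : Tendsto Bs atTop (nhds B))
    (x : ℕ → EuclideanSpace ℝ (Fin n)) (xb : EuclideanSpace ℝ (Fin n))
    (hx : Tendsto x atTop (nhds xb))
    (h0 : Tendsto (fun k => Bs k (x k)) atTop (nhds 0)) : B xb = 0 := by
  have h1 : Tendsto (fun k => B (x k) - Bs k (x k)) atTop (nhds 0) := by
    refine squeeze_zero_norm (a := fun k => ‖B - Bs k‖ * ‖x k‖) (fun k => ?_) ?_
    · 
      have : B (x k) - Bs k (x k) = (B - Bs k) (x k) := by simp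
      rw [this]
      exact ContinuousLinearMap.le_opNorm _ _
    · have hsub : Tendsto (fun k => B - Bs k) atTop (nhds 0) := by
        have := (tendsto_const_nhds (x := B) (f := atTop)).sub hBs
        simpa using this
      have := (hsub.norm).mul hx.norm
      simpa using this
  have h2 : Tendsto (fun k => B (x k)) atTop (nhds 0) := by
    have := h1.add h0
    simpa using this
  have h3 : Tendsto (fun k => B (x k)) atTop (nhds (B xb)) :=
    (B.continuous.tendsto xb).comp hx
  exact tendsto_nhds_unique h3 h2

end Aux

theorem stmt5 {m n : ℕ}
    (Bseq : ℕ → (EuclideanSpace ℝ (Fin n) →L[ℝ] EuclideanSpace ℝ (Fin m)))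
    (B : EuclideanSpace ℝ (Fin n) →L[ℝ] EuclideanSpace ℝ (Fin m))
    (hconv : Tendsto Bseq atTop (nhds B))
    (K : ℕ → ℝ)
    (hK : ∀ k, K k = ⨅ v : {v : EuclideanSpace ℝ (Fin n) //
        v ∈ (LinearMap.ker (Bseq k : EuclideanSpace ℝ (Fin n) →ₗ[ℝ] EuclideanSpace ℝ (Fin m)))ᗮ ∧ v ≠ 0}, ‖Bseq k v.1‖ / ‖v.1‖)
    (hKto0 : Tendsto K atTop (nhds 0))
    (hne : ∀ k, (LinearMap.ker (Bseq k : EuclideanSpace ℝ (Fin n) →ₗ[ℝ] EuclideanSpace ℝ (Fin m)))ᗮ ≠ ⊥) :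
    (∃ hbar : EuclideanSpace ℝ (Fin n), ‖hbar‖ = 1 ∧ B hbar = 0 ∧
      ∃ φ : ℕ → ℕ, StrictMono φ ∧
        ∃ v : ℕ → EuclideanSpace ℝ (Fin n),
          (∀ k, v k ∈ (LinearMap.ker (Bseq (φ k) : EuclideanSpace ℝ (Fin n) →ₗ[ℝ] EuclideanSpace ℝ (Fin m)))ᗮ ∧ ‖v k‖ = 1) ∧
          Tendsto v atTop (nhds hbar)) ∧
    Module.finrank ℝ (LinearMap.range (B : EuclideanSpace ℝ (Fin n) →ₗ[ℝ] EuclideanSpace ℝ (Fin m))) <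
      liminf (fun k => Module.finrank ℝ (LinearMap.range (Bseq k : EuclideanSpace ℝ (Fin n) →ₗ[ℝ] EuclideanSpace ℝ (Fin m)))) atTop := by
  classical
  -- Step 1: choose near-minimizing unit vectors
  have hchoice : ∀ k, ∃ u : EuclideanSpace ℝ (Fin n),
      u ∈ (LinearMap.ker (Bseq k : EuclideanSpace ℝ (Fin n) →ₗ[ℝ] EuclideanSpace ℝ (Fin m)))ᗮ ∧ ‖u‖ = 1 ∧ ‖Bseq k u‖ < K k + 1/(k+1) := by
    intro k
    obtain ⟨w, hw, hw0⟩ := (Submodule.ne_bot_iff _).mp (hne k)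
    haveI hnonempty : Nonempty {v : EuclideanSpace ℝ (Fin n) //
        v ∈ (LinearMap.ker (Bseq k : EuclideanSpace ℝ (Fin n) →ₗ[ℝ] EuclideanSpace ℝ (Fin m)))ᗮ ∧ v ≠ 0} := ⟨⟨w, hw, hw0⟩⟩
    have hpos : (0:ℝ) < 1/(k+1) := by positivity
    have hlt : K k < K k + 1/(k+1) := by linarith
    rw [hK k] at hlt
    obtain ⟨⟨z, hz, hz0⟩, hzlt⟩ := exists_lt_of_ciInf_lt hlt
    have hzn : ‖z‖ ≠ 0 := norm_ne_zero_iff.mpr hz0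
    refine ⟨‖z‖⁻¹ • z, Submodule.smul_mem _ _ hz, ?_, ?_⟩
    · rw [norm_smul, norm_inv, norm_norm, inv_mul_cancel₀ hzn]
    · rw [map_smul, norm_smul, norm_inv, norm_norm]
      calc ‖z‖⁻¹ * ‖Bseq k z‖ = ‖Bseq k z‖ / ‖z‖ := by rw [div_eq_inv_mul]
        _ < K k + 1/(k+1) := by rw [hK k]; simpa using hzlt
  choose u hu1 hu2 hu3 using hchoice
  -- Step 2: liminf of ranks is attained frequently
  set a : ℕ → ℕ := fun k => Module.finrank ℝ (LinearMap.range (Bseq k : EuclideanSpace ℝ (Fin n) →ₗ[ℝ] EuclideanSpace ℝ (Fin m))) with ha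
  set r := liminf a atTop with hr
  have hranknull : ∀ k, a k + Module.finrank ℝ (LinearMap.ker (Bseq k : EuclideanSpace ℝ (Fin n) →ₗ[ℝ] EuclideanSpace ℝ (Fin m))) = n := by
    intro k
    have h1 := LinearMap.finrank_range_add_finrank_ker ((Bseq k) : EuclideanSpace ℝ (Fin n) →ₗ[ℝ] EuclideanSpace ℝ (Fin m))
    simpa [finrank_euclideanSpace_fin, ha] using h1
  have haub : ∀ k, a k ≤ n := by
    intro k
    have := hranknull k
    omega
  have hbddT : BddAbove {b | ∀ᶠ k in atTop, b ≤ a k} := by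
    refine ⟨n, fun b hb => ?_⟩
    obtain ⟨k, hk⟩ := hb.exists
    exact hk.trans (haub k)
  have hTset : ∀ᶠ k in atTop, r ≤ a k := by
    have : r ∈ {b | ∀ᶠ k in atTop, b ≤ a k} := by
      rw [hr, liminf_eq]
      exact Nat.sSup_mem ⟨0, by simp⟩ hbddT
    exact this
  have hfreqle : ∃ᶠ k in atTop, a k ≤ r := by
    by_contra h
    rw [not_frequently] at h
    have hmem : r + 1 ∈ {b | ∀ᶠ k in atTop, b ≤ a k} :=
      h.mono fun k hk => by omega
    have := le_csSup hbddT hmem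
    rw [← liminf_eq, ← hr] at this
    omega
  have hfreq : ∃ᶠ k in atTop, a k = r :=
    (hfreqle.and_eventually hTset).mono fun k ⟨h1', h2'⟩ => le_antisymm h1' h2'
  obtain ⟨ψ, hψ, hψr⟩ := extraction_of_frequently_atTop hfreq
  -- Step 3: rank facts
  have hapos : ∀ k, 1 ≤ a k := by
    intro k
    by_contra h
    have h0 : a k = 0 := by omega
    have hker : Module.finrank ℝ (LinearMap.ker (Bseq k : EuclideanSpace ℝ (Fin n) →ₗ[ℝ] EuclideanSpace ℝ (Fin m))) = n := by
      have := hranknull k; omega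
    have hktop : LinearMap.ker (Bseq k : EuclideanSpace ℝ (Fin n) →ₗ[ℝ] EuclideanSpace ℝ (Fin m)) = ⊤ := by
      apply Submodule.eq_top_of_finrank_eq
      simpa [finrank_euclideanSpace_fin] using hker
    have : (LinearMap.ker (Bseq k : EuclideanSpace ℝ (Fin n) →ₗ[ℝ] EuclideanSpace ℝ (Fin m)))ᗮ = ⊥ := by
      rw [hktop, Submodule.top_orthogonal_eq_bot]
    exact hne k this
  have hr1 : 1 ≤ r := hψr 0 ▸ hapos (ψ 0)
  have hrn : r ≤ n := hψr 0 ▸ haub (ψ 0)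
  set d := n - r with hd
  have hdimker : ∀ k, Module.finrank ℝ (LinearMap.ker (Bseq (ψ k) : EuclideanSpace ℝ (Fin n) →ₗ[ℝ] EuclideanSpace ℝ (Fin m))) = d := by
    intro k
    have h1 := hranknull (ψ k)
    have h2 := hψr k
    omega
  -- Step 4: orthonormal families
  let e : ∀ k : ℕ, Fin d → EuclideanSpace ℝ (Fin n) := fun k i =>
    ((stdOrthonormalBasis ℝ (LinearMap.ker (Bseq (ψ k) : EuclideanSpace ℝ (Fin n) →ₗ[ℝ] EuclideanSpace ℝ (Fin m)))) (Fin.cast (hdimker k).symm i) : EuclideanSpace ℝ (Fin n))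
  have he_mem : ∀ k i, e k i ∈ LinearMap.ker (Bseq (ψ k) : EuclideanSpace ℝ (Fin n) →ₗ[ℝ] EuclideanSpace ℝ (Fin m)) := fun k i => SetLike.coe_mem _
  have he_norm : ∀ k i, ‖e k i‖ = 1 := by
    intro k i
    have := (stdOrthonormalBasis ℝ (LinearMap.ker (Bseq (ψ k) : EuclideanSpace ℝ (Fin n) →ₗ[ℝ] EuclideanSpace ℝ (Fin m)))).orthonormal.1
      (Fin.cast (hdimker k).symm i)
    exact this
  have he_inner : ∀ k (i j : Fin d), i ≠ j → (inner ℝ (e k i) (e k j) : ℝ) = 0 := by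
    intro k i j hij
    have hij' : Fin.cast (hdimker k).symm i ≠ Fin.cast (hdimker k).symm j := by
      intro hcontra
      apply hij
      exact Fin.ext (by simpa using congrArg Fin.val hcontra)
    have h2 : (inner ℝ ((stdOrthonormalBasis ℝ (LinearMap.ker (Bseq (ψ k) : EuclideanSpace ℝ (Fin n) →ₗ[ℝ] EuclideanSpace ℝ (Fin m)))) (Fin.cast (hdimker k).symm i))
        ((stdOrthonormalBasis ℝ (LinearMap.ker (Bseq (ψ k) : EuclideanSpace ℝ (Fin n) →ₗ[ℝ] EuclideanSpace ℝ (Fin m)))) (Fin.cast (hdimker k).symm j)) : ℝ) = 0 :=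
      (stdOrthonormalBasis ℝ (LinearMap.ker (Bseq (ψ k) : EuclideanSpace ℝ (Fin n) →ₗ[ℝ] EuclideanSpace ℝ (Fin m)))).orthonormal.2 hij'
    show (inner ℝ (e k i) (e k j) : ℝ) = 0
    simp only [e]
    rw [← Submodule.coe_inner]
    exact h2
  let g : ℕ → Fin (d+1) → EuclideanSpace ℝ (Fin n) := fun k => Fin.cons (u (ψ k)) (e k)
  have hg_norm : ∀ k i, ‖g k i‖ = 1 := by
    intro k i
    induction i using Fin.cases with
    | zero => simpa [g] using hu2 (ψ k)
    | succ i => simpa [g] using he_norm k i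
  have hg_inner : ∀ k (i j : Fin (d+1)), i ≠ j → (inner ℝ (g k i) (g k j) : ℝ) = 0 := by
    intro k i j hij
    have hcross : ∀ i' : Fin d, (inner ℝ (u (ψ k)) (e k i') : ℝ) = 0 := by
      intro i'
      have h1 : (inner ℝ (e k i') (u (ψ k)) : ℝ) = 0 :=
        (Submodule.mem_orthogonal _ _).mp (hu1 (ψ k)) _ (he_mem k i')
      rw [real_inner_comm]; exact h1
    induction i using Fin.cases with
    | zero =>
      induction j using Fin.cases with
      | zero => exact absurd rfl hij
      | succ j => simpa [g] using hcross j
    | succ i =>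
      induction j using Fin.cases with
      | zero =>
        have := hcross i
        rw [real_inner_comm] at this
        simpa [g] using this
      | succ j =>
        have hij' : i ≠ j := fun h => hij (by rw [h])
        simpa [g] using he_inner k i j hij'
  -- Step 5: compactness extraction
  have hgmem : ∀ k, g k ∈ Set.pi Set.univ (fun _ : Fin (d+1) => Metric.sphere (0:EuclideanSpace ℝ (Fin n)) 1) := by
    intro k i _
    rw [mem_sphere_zero_iff_norm]
    exact hg_norm k i
  obtain ⟨F, hF, φ2, hφ2, hgtends⟩ :=
    (isCompact_univ_pi fun _ : Fin (d+1) => isCompact_sphere (0:EuclideanSpace ℝ (Fin n)) 1).tendsto_subseq hgmem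
  have hpt : ∀ i, Tendsto (fun k => g (φ2 k) i) atTop (nhds (F i)) := by
    intro i
    exact tendsto_pi_nhds.mp hgtends i
  have hφt : Tendsto (ψ ∘ φ2) atTop atTop := (hψ.comp hφ2).tendsto_atTop
  have hBconv2 : Tendsto (fun k => Bseq (ψ (φ2 k))) atTop (nhds B) := hconv.comp hφt
  have hFnorm : ∀ i, ‖F i‖ = 1 := by
    intro i
    have := hF i (Set.mem_univ i)
    rwa [mem_sphere_zero_iff_norm] at this
  -- the limit vector
  set hbar := F 0 with hhbar
  -- the v sequence
  set v : ℕ → EuclideanSpace ℝ (Fin n) := fun k => u (ψ (φ2 k)) with hv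
  have hveq : ∀ k, v k = g (φ2 k) 0 := fun k => by simp [v, g]
  have hvtends : Tendsto v atTop (nhds hbar) := by
    have := hpt 0
    simpa [← hveq] using this
  -- B hbar = 0
  have hBv0 : Tendsto (fun k => Bseq (ψ (φ2 k)) (v k)) atTop (nhds 0) := by
    rw [tendsto_zero_iff_norm_tendsto_zero]
    apply squeeze_zero (fun k => norm_nonneg _)
      (g := fun k => K (ψ (φ2 k)) + 1/(ψ (φ2 k) + 1))
    · intro k
      exact le_of_lt (hu3 (ψ (φ2 k)))
    · have h1 : Tendsto (fun k => K (ψ (φ2 k))) atTop (nhds 0) := hKto0.comp hφt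
      have h2 : Tendsto (fun k : ℕ => 1/((ψ (φ2 k) : ℝ) + 1)) atTop (nhds 0) :=
        tendsto_one_div_add_atTop_nhds_zero_nat.comp hφt
      have := h1.add h2
      simpa using this
  have hBhbar : B hbar = 0 :=
    stmt5_aux_ker_of_lim (fun k => Bseq (ψ (φ2 k))) B hBconv2 v hbar hvtends hBv0
  -- kernel membership of other limits
  have hFker : ∀ i : Fin (d+1), F i ∈ LinearMap.ker (B : EuclideanSpace ℝ (Fin n) →ₗ[ℝ] EuclideanSpace ℝ (Fin m)) := by
    intro i
    induction i using Fin.cases with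
    | zero => exact LinearMap.mem_ker.mpr hBhbar
    | succ i =>
      have h0 : Tendsto (fun k => Bseq (ψ (φ2 k)) (g (φ2 k) i.succ)) atTop (nhds 0) := by
        have heq : ∀ k, Bseq (ψ (φ2 k)) (g (φ2 k) i.succ) = 0 := by
          intro k
          have := he_mem (φ2 k) i
          simpa [g] using this
        simp only [heq]
        exact tendsto_const_nhds
      exact LinearMap.mem_ker.mpr
        (stmt5_aux_ker_of_lim (fun k => Bseq (ψ (φ2 k))) B hBconv2 _ _ (hpt i.succ) h0)
  -- orthonormality of F
  have hFinner : ∀ i j : Fin (d+1), i ≠ j → (inner ℝ (F i) (F j) : ℝ) = 0 := by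
    intro i j hij
    have h1 : Tendsto (fun k => (inner ℝ (g (φ2 k) i) (g (φ2 k) j) : ℝ)) atTop
        (nhds (inner ℝ (F i) (F j) : ℝ)) := (hpt i).inner (hpt j)
    have h2 : ∀ k, (inner ℝ (g (φ2 k) i) (g (φ2 k) j) : ℝ) = 0 := fun k =>
      hg_inner (φ2 k) i j hij
    simp only [h2] at h1
    exact tendsto_nhds_unique h1 tendsto_const_nhds
  have honF : Orthonormal ℝ F := ⟨hFnorm, fun i j hij => hFinner i j hij⟩
  -- linear independence inside ker B
  have hli : LinearIndependent ℝ F := honF.linearIndependent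
  let G : Fin (d+1) → LinearMap.ker (B : EuclideanSpace ℝ (Fin n) →ₗ[ℝ] EuclideanSpace ℝ (Fin m)) := fun i => ⟨F i, hFker i⟩
  have hliG : LinearIndependent ℝ G := by
    apply LinearIndependent.of_comp (LinearMap.ker (B : EuclideanSpace ℝ (Fin n) →ₗ[ℝ] EuclideanSpace ℝ (Fin m))).subtype
    exact hli
  have hcard : d + 1 ≤ Module.finrank ℝ (LinearMap.ker (B : EuclideanSpace ℝ (Fin n) →ₗ[ℝ] EuclideanSpace ℝ (Fin m))) := by
    have := hliG.fintype_card_le_finrank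
    simpa using this
  have hrnB : Module.finrank ℝ (LinearMap.range (B : EuclideanSpace ℝ (Fin n) →ₗ[ℝ] EuclideanSpace ℝ (Fin m))) +
      Module.finrank ℝ (LinearMap.ker (B : EuclideanSpace ℝ (Fin n) →ₗ[ℝ] EuclideanSpace ℝ (Fin m))) = n := by
    have h1 := LinearMap.finrank_range_add_finrank_ker (B : EuclideanSpace ℝ (Fin n) →ₗ[ℝ] EuclideanSpace ℝ (Fin m))
    simpa [finrank_euclideanSpace_fin] using h1
  constructor
  · exact ⟨hbar, hFnorm 0, hBhbar, ψ ∘ φ2, hψ.comp hφ2,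
      v, fun k => ⟨hu1 (ψ (φ2 k)), hu2 (ψ (φ2 k))⟩, hvtends⟩
  · omega
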